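/- Suppose 0 < q and F is an entire function with F(0) ≠ 0, |F(z)| ≤ C·exp(|z|²/4) for all z, and F vanishes on a set Γ* ⊂ ℂ \ {0} with counting function n(r) = card(Γ* ∩ closed disc of radius r) satisfying n(r) ≥ q r² for all r ≥ C₀, for some constants C, C₀ > 0. If q > 1/2, then F ≡ 0, a contradiction; hence no such nonzero F exists. -/

import Mathlib

open Complex Finset

lemma sum_range_cast (n : ℕ) : ∑ i ∈ Finset.range n, (i:ℝ) = n * (n - 1) / 2 := by
  induction n with
  | zero => simp
  | succ k ih => rw [Finset.sum_range_succ, ih]; push_cast; ring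

lemma log_ratio_ge (i : ℕ) :
    (1:ℝ)/(i+2) ≤ Real.log ((i:ℝ)+2) - Real.log ((i:ℝ)+1) := by
  have h1 : (0:ℝ) < (i:ℝ)+1 := by positivity
  have h2 : (0:ℝ) < (i:ℝ)+2 := by positivity
  have := Real.log_le_sub_one_of_pos (show (0:ℝ) < ((i:ℝ)+1)/((i:ℝ)+2) by positivity)
  rw [Real.log_div h1.ne' h2.ne'] at this
  have : Real.log ((i:ℝ)+2) - Real.log ((i:ℝ)+1) ≥ 1 - ((i:ℝ)+1)/((i:ℝ)+2) := by linarith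
  calc (1:ℝ)/(i+2) = 1 - ((i:ℝ)+1)/((i:ℝ)+2) := by rw [eq_sub_iff_add_eq, ← add_div, div_eq_one_iff_eq h2.ne']; push_cast; ring
    _ ≤ _ := this

lemma factor_zeros (F : ℂ → ℂ) (hF : Differentiable ℂ F) (S : Finset ℂ)
    (hS : ∀ a ∈ S, F a = 0) :
    ∃ G : ℂ → ℂ, Differentiable ℂ G ∧ ∀ z, F z = (∏ a ∈ S, (z - a)) * G z := by
  induction S using Finset.induction generalizing F with
  | empty => exact ⟨F, hF, fun z => by simp⟩
  | @insert a s ha ih =>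
    have hFa : F a = 0 := hS a (Finset.mem_insert_self a s)
    have hd : Differentiable ℂ (dslope F a) :=
      differentiableOn_univ.mp ((Complex.differentiableOn_dslope (Filter.univ_mem)).mpr
        hF.differentiableOn)
    have hfac : ∀ z, F z = (z - a) * dslope F a z := by
      intro z
      rcases eq_or_ne z a with rfl | hz
      · simp [hFa]
      · rw [dslope_of_ne F hz, slope_def_field, hFa]
        rw [sub_zero, mul_comm, div_mul_cancel₀ _ (sub_ne_zero.mpr hz)]
    have hvans : ∀ b ∈ s, dslope F a b = 0 := by
      intro b hb
      have hba : b ≠ a := fun h => ha (h ▸ hb)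
      have := hfac b
      rw [hS b (Finset.mem_insert_of_mem hb)] at this
      have h2 : (b - a) ≠ 0 := sub_ne_zero.mpr hba
      exact (mul_eq_zero.mp this.symm).resolve_left h2
    obtain ⟨G, hG, hGf⟩ := ih (dslope F a) hd hvans
    refine ⟨G, hG, fun z => ?_⟩
    rw [Finset.prod_insert ha, mul_assoc, ← hGf z, hfac z]

lemma blaschke (F : ℂ → ℂ) (hF : Differentiable ℂ F) {M R : ℝ} (hR : 0 < R)
    (hb : ∀ z : ℂ, ‖z‖ = R → ‖F z‖ ≤ M)
    (S : Finset ℂ) (hS0 : ∀ a ∈ S, (0:ℝ) < ‖a‖)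
    (hSr : ∀ a ∈ S, ‖a‖ < R) (hSz : ∀ a ∈ S, F a = 0) :
    ‖F 0‖ * ∏ a ∈ S, (R / ‖a‖) ≤ M := by
  obtain ⟨G, hG, hGf⟩ := factor_zeros F hF S hSz
  set H : ℂ → ℂ := fun z => G z * ∏ a ∈ S, (((R:ℂ)^2 - (starRingEnd ℂ a) * z) / R) with hHdef
  have hH : Differentiable ℂ H := by
    apply hG.mul
    apply Differentiable.fun_finsetProd
    intro a _
    exact ((differentiable_const _).sub ((differentiable_const _).mul differentiable_id)).div_const _
  have hbound : ∀ z ∈ frontier (Metric.ball (0:ℂ) R), ‖H z‖ ≤ M := by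
    intro z hz
    rw [frontier_ball (0:ℂ) hR.ne'] at hz
    have hzR : ‖z‖ = R := by simpa using hz
    have hfac : ∀ a ∈ S, ‖((R:ℂ)^2 - (starRingEnd ℂ a) * z) / R‖
        = ‖z - a‖ := by
      intro a _
      have hzz : z * (starRingEnd ℂ z) = ((R:ℂ)^2) := by
        rw [Complex.mul_conj]
        norm_cast
        rw [← Complex.sq_norm, hzR]
      have : (R:ℂ)^2 - (starRingEnd ℂ a) * z = z * (starRingEnd ℂ (z - a)) := by
        rw [map_sub, mul_sub, hzz]; ring
      rw [norm_div, this, norm_mul, Complex.norm_conj, hzR]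
      rw [Complex.norm_real, Real.norm_eq_abs, abs_of_pos hR, mul_comm, mul_div_assoc, div_self hR.ne', mul_one]
    have : ‖H z‖ = ‖F z‖ := by
      rw [hHdef]
      simp only
      rw [norm_mul, norm_prod, Finset.prod_congr rfl hfac, hGf z, norm_mul, norm_prod, mul_comm]
    rw [this]
    exact hb z hzR
  have h0mem : (0:ℂ) ∈ closure (Metric.ball (0:ℂ) R) := by
    rw [closure_ball (0:ℂ) hR.ne']
    exact Metric.mem_closedBall_self hR.le
  have hmax : ‖H 0‖ ≤ M :=
    Complex.norm_le_of_forall_mem_frontier_norm_le Metric.isBounded_ball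
      hH.diffContOnCl hbound h0mem
  have hH0 : ‖H 0‖ = ‖G 0‖ * R ^ S.card := by
    rw [hHdef]
    simp only [mul_zero, sub_zero]
    rw [norm_mul, norm_prod]
    congr 1
    rw [Finset.prod_congr rfl (fun a _ => ?_), Finset.prod_const]
    rw [norm_div, norm_pow, Complex.norm_real, Real.norm_eq_abs, abs_of_pos hR, sq, mul_div_assoc,
      div_self hR.ne', mul_one]
  have hF0 : ‖F 0‖ = (∏ a ∈ S, ‖a‖) * ‖G 0‖ := by
    rw [hGf 0, norm_mul, norm_prod]
    congr 1
    exact Finset.prod_congr rfl fun a _ => by rw [zero_sub, norm_neg]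
  calc ‖F 0‖ * ∏ a ∈ S, (R / ‖a‖)
      = ‖G 0‖ * ∏ a ∈ S, (‖a‖ * (R / ‖a‖)) := by
        rw [hF0, Finset.prod_mul_distrib]; ring
    _ = ‖G 0‖ * R ^ S.card := by
        rw [Finset.prod_congr rfl fun a ha => mul_div_cancel₀ R (hS0 a ha).ne',
          Finset.prod_const]
    _ = ‖H 0‖ := hH0.symm
    _ ≤ M := by exact hmax

set_option maxHeartbeats 1000000 in
theorem stmt_11 (q C C₀ : ℝ) (hq : 1/2 < q) (hC : 0 < C) (hC₀ : 0 < C₀)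
    (F : ℂ → ℂ) (hF : Differentiable ℂ F) (hF0 : F 0 ≠ 0)
    (hbd : ∀ z : ℂ, ‖F z‖ ≤ C * Real.exp (‖z‖ ^ 2 / 4))
    (Γ : Set ℂ) (hΓ0 : (0 : ℂ) ∉ Γ) (hvan : ∀ w ∈ Γ, F w = 0)
    (hcount : ∀ r : ℝ, C₀ ≤ r →
      q * r ^ 2 ≤ ((Γ ∩ Metric.closedBall (0:ℂ) r).ncard : ℝ)) :
    False := by
  have hq0 : 0 < q := by linarith
  -- finiteness of truncations of Γ
  have hfin : ∀ r : ℝ, (Γ ∩ Metric.closedBall (0:ℂ) r).Finite := by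
    intro r
    have h1 : (Γ ∩ Metric.closedBall (0:ℂ) (max r C₀)).Finite := by
      by_contra hinf
      have := hcount (max r C₀) (le_max_right _ _)
      rw [Set.Infinite.ncard (fun h => hinf h)] at this
      have h2 : (0:ℝ) < q * (max r C₀)^2 := by
        have : (0:ℝ) < max r C₀ := lt_of_lt_of_le hC₀ (le_max_right _ _)
        positivity
      simp at this; linarith
    exact h1.subset (Set.inter_subset_inter_right _
      (Metric.closedBall_subset_closedBall (le_max_left _ _)))
  -- choose m
  obtain ⟨m, hm⟩ := exists_nat_gt (3*q/(q-1/2) + 3)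
  have hm3 : (3:ℝ) < m := by
    have hd : (0:ℝ) < q-1/2 := by linarith
    have h0 : (0:ℝ) ≤ 3*q/(q-1/2) := by positivity
    linarith
  have hmN : 3 < m := by exact_mod_cast hm3
  have hm0 : (0:ℝ) < m := by linarith
  have hqm : (m:ℝ)^2/2 < q*((m:ℝ)-1)*((m:ℝ)-2) := by
    have h1 : 3*q/(q-1/2) < m - 3 := by linarith
    have h2 : 3*q < (q-1/2)*(m-3) := by
      rw [div_lt_iff₀ (by linarith)] at h1; nlinarith
    nlinarith
  set K : ℝ := q*((m:ℝ)-1)*((m:ℝ)-2)/(2*(m:ℝ)^2) - 1/4 with hK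
  have hKpos : 0 < K := by
    rw [hK, sub_pos, lt_div_iff₀ (by positivity)]
    nlinarith
  have habs0 : 0 < ‖F 0‖ := by
    simpa [norm_pos_iff] using hF0
  -- key inequality for every R > 0
  have key : ∀ R : ℝ, 0 < R → Real.log (‖F 0‖) ≤
      Real.log C + q*C₀^2*Real.log m - K * R^2 := by
    intro R hR
    have hmain : Real.log (‖F 0‖) ≤
        Real.log C + q*C₀^2*Real.log m -
          (q*(R/m)^2*(((m:ℝ)-1)*((m:ℝ)-2)/2) - R^2/4) := by
      have hRm : (0:ℝ) < R/m := by positivity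
      set ρ : ℕ → ℝ := fun j => j * (R/m) with hρ
      have hρmono : ∀ {i j : ℕ}, i ≤ j → ρ i ≤ ρ j := by
        intro i j hij
        have : (i:ℝ) ≤ j := by exact_mod_cast hij
        rw [hρ]; dsimp only; nlinarith
      have hρpos : ∀ j : ℕ, 0 < j → 0 < ρ j := by
        intro j hj
        have : (0:ℝ) < j := by exact_mod_cast hj
        rw [hρ]; dsimp only; positivity
      have hρm : ρ m = R := by
        rw [hρ]; dsimp only; field_simp
      set S : Finset ℂ := (hfin (ρ (m-1))).toFinset with hS
      have hmem : ∀ a, a ∈ S ↔ a ∈ Γ ∧ ‖a‖ ≤ ρ (m-1) := by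
        intro a
        rw [hS, Set.Finite.mem_toFinset, Set.mem_inter_iff, Metric.mem_closedBall,
          Complex.dist_eq, sub_zero]
      have hSpos : ∀ a ∈ S, (0:ℝ) < ‖a‖ := by
        intro a ha
        have h1 := ((hmem a).1 ha).1
        have h2 : a ≠ 0 := fun h => hΓ0 (h ▸ h1)
        simpa [norm_pos_iff] using h2
      have hSlt : ∀ a ∈ S, ‖a‖ < R := by
        intro a ha
        have h1 := ((hmem a).1 ha).2
        have h2 : ρ (m-1) < ρ m := by
          rw [hρ]; dsimp only
          have : ((m-1:ℕ):ℝ) < m := by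
            rw [Nat.cast_sub (by omega), Nat.cast_one]; linarith
          nlinarith
        rw [← hρm]; exact lt_of_le_of_lt h1 h2
      have hSz : ∀ a ∈ S, F a = 0 := fun a ha => hvan a ((hmem a).1 ha).1
      have hb : ∀ z : ℂ, ‖z‖ = R → ‖F z‖ ≤ C * Real.exp (R^2/4) := by
        intro z hz
        simpa [hz] using hbd z
      have hbl := blaschke F hF hR hb S hSpos hSlt hSz
      have hPpos : (0:ℝ) < ∏ a ∈ S, (R / ‖a‖) :=
        Finset.prod_pos fun a ha => div_pos hR (hSpos a ha)
      have hlog1 : Real.log (‖F 0‖) + ∑ a ∈ S, Real.log (R / ‖a‖)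
          ≤ Real.log C + R^2/4 := by
        have h1 := Real.log_le_log (by positivity) hbl
        rw [Real.log_mul habs0.ne' hPpos.ne',
          Real.log_prod (fun a ha => (div_pos hR (hSpos a ha)).ne'),
          Real.log_mul hC.ne' (Real.exp_pos _).ne', Real.log_exp] at h1
        exact h1
      obtain ⟨c, hc⟩ : ∃ c : ℕ → ℝ, ∀ i, c i = Real.log ((i:ℝ)+2) - Real.log ((i:ℝ)+1) :=
        ⟨_, fun _ => rfl⟩
      have hcpos : ∀ i : ℕ, 0 < c i := fun i => by
        rw [hc i]; exact lt_of_lt_of_le (by positivity) (log_ratio_ge i)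
      -- step A : pointwise telescoping bound
      have stepA : ∀ a ∈ S, ∑ i ∈ Finset.range (m-1),
          (if ‖a‖ ≤ ρ (i+1) then c i else 0) ≤ Real.log (R / ‖a‖) := by
        intro a ha
        have hapos := hSpos a ha
        have hale := ((hmem a).1 ha).2
        set φ : ℕ → ℝ := fun k => Real.log (max (ρ (k+1)) (‖a‖)) with hφ
        have hterm : ∀ i ∈ Finset.range (m-1),
            (if ‖a‖ ≤ ρ (i+1) then c i else 0) ≤ φ (i+1) - φ i := by
          intro i _
          by_cases hcase : ‖a‖ ≤ ρ (i+1)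
          · rw [if_pos hcase, hφ]
            dsimp only
            rw [max_eq_left hcase, max_eq_left (hcase.trans (hρmono (by omega)))]
            have e1 : ρ (i+1) = ((i:ℝ)+1) * (R/m) := by rw [hρ]; push_cast; ring
            have e2 : ρ (i+1+1) = ((i:ℝ)+2) * (R/m) := by rw [hρ]; push_cast; ring
            rw [e1, e2, Real.log_mul (by positivity) hRm.ne',
              Real.log_mul (by positivity) hRm.ne', hc i]
            linarith
          · rw [if_neg hcase, hφ]
            dsimp only
            have h1 : (0:ℝ) < max (ρ (i+1)) (‖a‖) :=
              lt_of_lt_of_le hapos (le_max_right _ _)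
            have h2 : max (ρ (i+1)) (‖a‖) ≤ max (ρ (i+1+1)) (‖a‖) :=
              max_le_max (hρmono (by omega)) le_rfl
            have := Real.log_le_log h1 h2
            linarith
        calc ∑ i ∈ Finset.range (m-1), (if ‖a‖ ≤ ρ (i+1) then c i else 0)
            ≤ ∑ i ∈ Finset.range (m-1), (φ (i+1) - φ i) := Finset.sum_le_sum hterm
          _ = φ (m-1) - φ 0 := Finset.sum_range_sub φ (m-1)
          _ ≤ Real.log R - Real.log (‖a‖) := by
              have hA : φ (m-1) = Real.log R := by
                rw [hφ]
                dsimp only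
                have hmm : m - 1 + 1 = m := by omega
                rw [hmm, hρm, max_eq_left (hale.trans (by rw [← hρm]; exact hρmono (by omega)))]
              have hB : Real.log (‖a‖) ≤ φ 0 :=
                Real.log_le_log hapos (le_max_right _ _)
              linarith
          _ = Real.log (R / ‖a‖) := (Real.log_div hR.ne' hapos.ne').symm
      -- step B : swap sums, identify counts
      have hNcard : ∀ i : ℕ, i ∈ Finset.range (m-1) →
          ((Γ ∩ Metric.closedBall (0:ℂ) (ρ (i+1))).ncard : ℝ)
            = ((S.filter (fun a => ‖a‖ ≤ ρ (i+1))).card : ℝ) := by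
        intro i hi
        congr 1
        have hset : Γ ∩ Metric.closedBall (0:ℂ) (ρ (i+1))
            = ((S.filter (fun a => ‖a‖ ≤ ρ (i+1))) : Set ℂ) := by
          ext a
          simp only [Finset.coe_filter, Set.mem_setOf_eq, Set.mem_inter_iff,
            Metric.mem_closedBall, Complex.dist_eq, sub_zero, hmem a]
          constructor
          · rintro ⟨h1, h2⟩
            have hi1 : i + 1 ≤ m - 1 := by
              rw [Finset.mem_range] at hi; omega
            exact ⟨⟨h1, h2.trans (hρmono hi1)⟩, h2⟩
          · rintro ⟨⟨h1, _⟩, h2⟩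
            exact ⟨h1, h2⟩
        rw [hset, Set.ncard_coe_finset]
      have stepB : ∑ i ∈ Finset.range (m-1),
          ((Γ ∩ Metric.closedBall (0:ℂ) (ρ (i+1))).ncard : ℝ) * c i
          ≤ ∑ a ∈ S, Real.log (R / ‖a‖) := by
        calc ∑ i ∈ Finset.range (m-1),
            ((Γ ∩ Metric.closedBall (0:ℂ) (ρ (i+1))).ncard : ℝ) * c i
            = ∑ i ∈ Finset.range (m-1), ∑ a ∈ S,
                (if ‖a‖ ≤ ρ (i+1) then c i else 0) := by
              refine Finset.sum_congr rfl fun i hi => ?_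
              rw [hNcard i hi, ← Finset.sum_filter, Finset.sum_const, nsmul_eq_mul]
          _ = ∑ a ∈ S, ∑ i ∈ Finset.range (m-1),
                (if ‖a‖ ≤ ρ (i+1) then c i else 0) := Finset.sum_comm
          _ ≤ ∑ a ∈ S, Real.log (R / ‖a‖) := Finset.sum_le_sum stepA
      -- step C : lower bound the counts
      have hN : ∀ i : ℕ, q * (ρ (i+1))^2 - q*C₀^2
          ≤ ((Γ ∩ Metric.closedBall (0:ℂ) (ρ (i+1))).ncard : ℝ) := by
        intro i
        by_cases hcs : C₀ ≤ ρ (i+1)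
        · have h1 := hcount (ρ (i+1)) hcs
          have h2 : (0:ℝ) ≤ q*C₀^2 := by positivity
          linarith
        · have h1 : ρ (i+1) < C₀ := not_le.mp hcs
          have h2 : 0 < ρ (i+1) := hρpos (i+1) (by omega)
          have h3 : (0:ℝ) ≤ ((Γ ∩ Metric.closedBall (0:ℂ) (ρ (i+1))).ncard : ℝ) :=
            Nat.cast_nonneg _
          have h4 : (ρ (i+1))^2 ≤ C₀^2 := pow_le_pow_left₀ h2.le h1.le 2
          have h5 : q*(ρ (i+1))^2 ≤ q*C₀^2 := mul_le_mul_of_nonneg_left h4 hq0.le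
          linarith
      -- step D : arithmetic
      have hsumc : ∑ i ∈ Finset.range (m-1), c i = Real.log m := by
        have h1 := Finset.sum_range_sub (fun k => Real.log ((k:ℝ)+1)) (m-1)
        have h2 : ∑ i ∈ Finset.range (m-1), c i
            = ∑ i ∈ Finset.range (m-1), (Real.log (((i+1:ℕ):ℝ)+1) - Real.log ((i:ℝ)+1)) := by
          refine Finset.sum_congr rfl fun i _ => ?_
          rw [hc i]
          push_cast
          ring_nf
        rw [h2, h1]
        have h3 : (((m-1:ℕ)):ℝ)+1 = (m:ℝ) := by
          rw [Nat.cast_sub (by omega), Nat.cast_one]; ring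
        rw [h3]
        simp
      have stepD : q*(R/m)^2*(((m:ℝ)-1)*((m:ℝ)-2)/2) - q*C₀^2*Real.log m
          ≤ ∑ i ∈ Finset.range (m-1),
            ((Γ ∩ Metric.closedBall (0:ℂ) (ρ (i+1))).ncard : ℝ) * c i := by
        have h1 : ∑ i ∈ Finset.range (m-1), (q * (ρ (i+1))^2 - q*C₀^2) * c i
            ≤ ∑ i ∈ Finset.range (m-1),
              ((Γ ∩ Metric.closedBall (0:ℂ) (ρ (i+1))).ncard : ℝ) * c i :=
          Finset.sum_le_sum fun i _ => mul_le_mul_of_nonneg_right (hN i) (hcpos i).le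
        refine le_trans ?_ h1
        have h2 : ∀ i ∈ Finset.range (m-1),
            q*(R/m)^2 * ((i:ℝ)) - q*C₀^2 * c i ≤ (q * (ρ (i+1))^2 - q*C₀^2) * c i := by
          intro i _
          have e1 : (ρ (i+1))^2 = (((i:ℝ)+1))^2 * (R/m)^2 := by
            rw [hρ]; dsimp only; push_cast; ring
          have h3 := log_ratio_ge i
          have h4 : (i:ℝ) ≤ ((i:ℝ)+1)^2 * c i := by
            have h5 : (i:ℝ) ≤ ((i:ℝ)+1)^2 * (1/((i:ℝ)+2)) := by
              rw [mul_one_div, le_div_iff₀ (by positivity)]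
              nlinarith
            refine h5.trans ?_
            have h6 : (1:ℝ)/((i:ℝ)+2) ≤ c i := by rw [hc i]; exact log_ratio_ge i
            exact mul_le_mul_of_nonneg_left h6 (sq_nonneg _)
          have h7 : q*(R/m)^2 * (i:ℝ) ≤ q*(R/m)^2 * (((i:ℝ)+1)^2 * c i) :=
            mul_le_mul_of_nonneg_left h4 (by positivity)
          have e2 : (q*((((i:ℝ)+1))^2*(R/m)^2) - q*C₀^2)*c i
              = q*(R/m)^2*((((i:ℝ)+1))^2 * c i) - q*C₀^2*c i := by ring
          rw [e1, e2]
          linarith [h7]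
        calc q*(R/m)^2*(((m:ℝ)-1)*((m:ℝ)-2)/2) - q*C₀^2*Real.log m
            = ∑ i ∈ Finset.range (m-1), (q*(R/m)^2 * ((i:ℝ)) - q*C₀^2 * c i) := by
              rw [Finset.sum_sub_distrib, ← Finset.mul_sum, ← Finset.mul_sum, hsumc,
                sum_range_cast (m-1)]
              have : ((m-1:ℕ):ℝ) = (m:ℝ)-1 := by
                rw [Nat.cast_sub (by omega)]; norm_num
              rw [this]
              ring
          _ ≤ _ := Finset.sum_le_sum h2
      -- combine
      have := le_trans stepD stepB
      linarith [hlog1, this]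
    have hKR2 : K * R^2 = q*(R/m)^2*(((m:ℝ)-1)*((m:ℝ)-2)/2) - R^2/4 := by
      rw [hK]
      field_simp
    rw [hKR2]
    exact hmain
  -- choose R to get contradiction
  set X : ℝ := Real.log C + q*C₀^2*Real.log m - Real.log (‖F 0‖) with hX
  set R : ℝ := Real.sqrt ((|X|+1)/K) with hRdef
  have hRpos : 0 < R := Real.sqrt_pos.mpr (by positivity)
  have hR2 : R^2 = (|X|+1)/K := Real.sq_sqrt (by positivity)
  have := key R hRpos
  rw [hR2] at this
  have hKR : K * ((|X|+1)/K) = |X| + 1 := by field_simp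
  rw [hKR] at this
  have : |X| + 1 ≤ X := by linarith [this]
  have := le_abs_self X
  linarith
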